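/- Let a < b be real numbers, h := b - a, let C > 0, and let v : ℝ → ℝ be continuously differentiable on [a,b], not identically zero on [a,b], and satisfy the inverse (trace) inequality v(a)^2 ≤ C^2 h^{-1} ∫_a^b v(t)^2 dt. If 0 < θ < 2 C^{-2}, then ∫_a^b ( v(t)^2 + θ h v'(t) v(t) ) dt = ∫_a^b v(t)^2 dt + (θ h / 2)( v(b)^2 - v(a)^2 ) ≥ (1 - C^2 θ / 2) ∫_a^b v(t)^2 dt + (θ h / 2) v(b)^2 > 0. (Lemma on positivity of K_t and M_t, part 2.) -/

import Mathlib

open MeasureTheory Set Function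

/-- Positivity of the quadratic form of the time matrix `M_t`:
for `v` continuously differentiable and not identically zero on `[a,b]`, `h = b - a`,
satisfying the trace inverse inequality `v(a)^2 ≤ C^2 h⁻¹ ∫_a^b v^2` with `C > 0`,
and for `0 < θ < 2 C⁻²`, one has
`∫_a^b (v^2 + θ h v' v) dt = ∫_a^b v^2 dt + (θh/2)(v(b)^2 − v(a)^2)
  ≥ (1 − C^2 θ/2) ∫_a^b v^2 dt + (θh/2) v(b)^2 > 0`. -/
theorem stmt_1 (a b h C θ : ℝ) (hab : a < b) (hh : h = b - a) (hC : 0 < C)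
    (v v' : ℝ → ℝ)
    (hv : ∀ t ∈ Set.Icc a b, HasDerivAt v (v' t) t)
    (hv' : ContinuousOn v' (Set.Icc a b))
    (hnz : ∃ t ∈ Set.Icc a b, v t ≠ 0)
    (htrace : (v a) ^ 2 ≤ C ^ 2 * h⁻¹ * ∫ t in a..b, (v t) ^ 2)
    (hθ0 : 0 < θ) (hθ : θ < 2 / C ^ 2) :
    (∫ t in a..b, ((v t) ^ 2 + θ * h * (v' t * v t)))
      = (∫ t in a..b, (v t) ^ 2) + (θ * h / 2) * ((v b) ^ 2 - (v a) ^ 2) ∧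
    (1 - C ^ 2 * θ / 2) * (∫ t in a..b, (v t) ^ 2) + (θ * h / 2) * (v b) ^ 2
      ≤ (∫ t in a..b, (v t) ^ 2) + (θ * h / 2) * ((v b) ^ 2 - (v a) ^ 2) ∧
    0 < (1 - C ^ 2 * θ / 2) * (∫ t in a..b, (v t) ^ 2) + (θ * h / 2) * (v b) ^ 2 := by
  have hle : a ≤ b := hab.le
  have huIcc : Set.uIcc a b = Set.Icc a b := Set.uIcc_of_le hle
  have hcv : ContinuousOn v (Set.Icc a b) := fun t ht =>
    (hv t ht).continuousAt.continuousWithinAt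
  have hi1 : IntervalIntegrable (fun t => (v t) ^ 2) volume a b := by
    apply ContinuousOn.intervalIntegrable
    rw [huIcc]; exact hcv.pow 2
  have hi2 : IntervalIntegrable (fun t => θ * h * (v' t * v t)) volume a b := by
    apply ContinuousOn.intervalIntegrable
    rw [huIcc]
    exact (continuousOn_const.mul (hv'.mul hcv))
  have hi3 : IntervalIntegrable (fun t => v' t * v t) volume a b := by
    apply ContinuousOn.intervalIntegrable
    rw [huIcc]; exact hv'.mul hcv
  -- FTC
  have hftc : (∫ t in a..b, v' t * v t) = (v b) ^ 2 / 2 - (v a) ^ 2 / 2 := by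
    apply intervalIntegral.integral_eq_sub_of_hasDerivAt (f := fun t => (v t) ^ 2 / 2)
    · intro t ht
      rw [huIcc] at ht
      have := ((hv t ht).pow 2).div_const 2
      convert this using 1
      push_cast
      · rfl
      · rfl
      · rw [show (2:ℕ) - 1 = 1 from rfl]; push_cast; ring
    · exact hi3
  have hI : 0 < ∫ t in a..b, (v t) ^ 2 := by
    obtain ⟨t0, ht0, hvt0⟩ := hnz
    have hca : ContinuousAt v t0 := (hv t0 ht0).continuousAt
    have hne : ∀ᶠ x in nhds t0, v x ≠ 0 := hca.eventually_ne hvt0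
    obtain ⟨ε, hε, hball⟩ := Metric.eventually_nhds_iff.mp hne
    set c := max a (t0 - ε) with hc
    set d := min b (t0 + ε) with hd
    have hcd : c < d := by
      apply max_lt <;> apply lt_min
      · exact hab
      · linarith [ht0.1]
      · linarith [ht0.2]
      · linarith
    rw [intervalIntegral.integral_pos_iff_support_of_nonneg_ae'
      (Filter.Eventually.of_forall (fun x => sq_nonneg (v x))) hi1]
    refine ⟨hab, ?_⟩
    have hsub : Set.Ioo c d ⊆ Function.support (fun t => (v t) ^ 2) ∩ Set.Ioc a b := by
      intro x hx
      constructor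
      · have hx0 : v x ≠ 0 := by
          apply hball
          rw [Real.dist_eq, abs_lt]
          have h1 : t0 - ε ≤ c := le_max_right _ _
          have h2 : d ≤ t0 + ε := min_le_right _ _
          constructor
          · linarith [hx.1]
          · linarith [hx.2]
        simp [Function.mem_support, pow_eq_zero_iff, hx0]
      · exact ⟨lt_of_le_of_lt (le_max_left _ _) hx.1, le_trans hx.2.le (min_le_left _ _)⟩
    calc (0 : ENNReal) < volume (Set.Ioo c d) := by
          rw [Real.volume_Ioo]; exact ENNReal.ofReal_pos.mpr (by linarith)
      _ ≤ _ := measure_mono hsub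
  have heq : (∫ t in a..b, ((v t) ^ 2 + θ * h * (v' t * v t)))
      = (∫ t in a..b, (v t) ^ 2) + (θ * h / 2) * ((v b) ^ 2 - (v a) ^ 2) := by
    rw [intervalIntegral.integral_add hi1 hi2, intervalIntegral.integral_const_mul, hftc]
    ring
  have hhpos : 0 < h := by rw [hh]; linarith
  have hC2 : 0 < C ^ 2 := pow_pos hC 2
  have hθC : C ^ 2 * θ / 2 < 1 := by
    rw [div_lt_one (by norm_num : (0:ℝ) < 2)] at *
    calc C ^ 2 * θ < C ^ 2 * (2 / C ^ 2) := by
          exact mul_lt_mul_of_pos_left hθ hC2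
      _ = 2 := by field_simp
  have hineq : (θ * h / 2) * (v a) ^ 2 ≤ (C ^ 2 * θ / 2) * ∫ t in a..b, (v t) ^ 2 := by
    have := mul_le_mul_of_nonneg_left htrace (le_of_lt (by positivity : (0:ℝ) < θ * h / 2))
    calc (θ * h / 2) * (v a) ^ 2 ≤ (θ * h / 2) * (C ^ 2 * h⁻¹ * ∫ t in a..b, (v t) ^ 2) := this
      _ = (C ^ 2 * θ / 2) * (h * h⁻¹) * ∫ t in a..b, (v t) ^ 2 := by ring
      _ = (C ^ 2 * θ / 2) * ∫ t in a..b, (v t) ^ 2 := by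
          rw [mul_inv_cancel₀ (ne_of_gt hhpos)]; ring
  refine ⟨heq, by linarith, ?_⟩
  have h1 : 0 < (1 - C ^ 2 * θ / 2) * ∫ t in a..b, (v t) ^ 2 := by
    apply mul_pos (by linarith) hI
  nlinarith [sq_nonneg (v b), mul_nonneg (le_of_lt (by positivity : (0:ℝ) < θ * h / 2)) (sq_nonneg (v b))]
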